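/- Let L, μ, σ > 0 with μ ≤ L, let L_R ≥ 0, let M, H be positive natural numbers, let T ≥ 1 be a natural number with μT ≤ 2L, and set γ = 1/(6L). Let a, e : ℕ → ℝ be sequences with a(t) ≥ 0 and e(t) ≥ 0 for all t, such that (γ/6)·e(t) ≤ (1 − γμ)·a(t) − a(t+1) + γ²σ²/M + 2L_R(H−1)γ³σ² for all 0 ≤ t < T. Define weights w(t) = (1 − μ/(6L))^{−(t+1)} and W = Σ_{t=0}^{T−1} w(t). Then (1/W)·Σ_{t=0}^{T−1} w(t)·e(t) ≤ 36L·exp(−μT/(6L))·a(0) + 2σ²/(μTM) + 4L_R(H−1)σ²/(3μ²T²). -/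

import Mathlib

set_option maxHeartbeats 1000000 in
/-- Theorem 1, case (a) (strongly convex, bounded variance, `T ≤ 2κ`) in its
deterministic form with explicit constants: with `γ = 1/(6L)` and weights
`w(t) = (1 − μ/(6L))^{−(t+1)}`,
`(1/W) Σ w(t) e(t) ≤ 36L exp(−μT/(6L)) a(0) + 2σ²/(μTM) + 4L_R(H−1)σ²/(3μ²T²)`. -/
theorem stmt_19 (L μ σ LR : ℝ) (hL : 0 < L) (hμ : 0 < μ) (hσ : 0 < σ)
    (hμL : μ ≤ L) (hLR : 0 ≤ LR)
    (M H : ℕ) (hM : 0 < M) (hH : 0 < H)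
    (T : ℕ) (hT : 1 ≤ T) (hTκ : μ * T ≤ 2 * L)
    (γ : ℝ) (hγ : γ = 1 / (6 * L))
    (a e : ℕ → ℝ) (ha : ∀ t, 0 ≤ a t) (he : ∀ t, 0 ≤ e t)
    (hrec : ∀ t < T, γ / 6 * e t ≤ (1 - γ * μ) * a t - a (t + 1)
      + γ ^ 2 * σ ^ 2 / M + 2 * LR * ((H : ℝ) - 1) * γ ^ 3 * σ ^ 2)
    (w : ℕ → ℝ) (hw : ∀ t, w t = (1 - μ / (6 * L)) ^ (-(t + 1 : ℤ)))
    (W : ℝ) (hW : W = ∑ t ∈ Finset.range T, w t) :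
    1 / W * ∑ t ∈ Finset.range T, w t * e t
      ≤ 36 * L * Real.exp (-(μ * T / (6 * L))) * a 0
        + 2 * σ ^ 2 / (μ * T * M)
        + 4 * LR * ((H : ℝ) - 1) * σ ^ 2 / (3 * μ ^ 2 * T ^ 2) := by
  have hL6 : (0:ℝ) < 6 * L := by linarith
  have hγ0 : 0 < γ := by rw [hγ]; positivity
  set x : ℝ := μ / (6 * L) with hxdef
  have hx0 : 0 < x := div_pos hμ hL6
  have hx1 : x ≤ 1 / 6 := by
    rw [hxdef, div_le_div_iff₀ hL6 (by norm_num : (0:ℝ) < 6)]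
    nlinarith
  have hγμ : γ * μ = x := by rw [hγ, hxdef]; field_simp
  set r : ℝ := 1 - x with hrdef
  have hr0 : 0 < r := by rw [hrdef]; linarith
  have hrne : r ≠ 0 := ne_of_gt hr0
  have hw' : ∀ t : ℕ, w t = (r⁻¹) ^ (t + 1) := by
    intro t
    rw [hw t, show (-((t:ℤ) + 1)) = -(((t + 1 : ℕ)) : ℤ) by push_cast; ring,
      zpow_neg, zpow_natCast, inv_pow]
  have hwpos : ∀ t : ℕ, 0 < w t := by
    intro t; rw [hw' t]; positivity
  have hH1 : (1:ℝ) ≤ H := by exact_mod_cast hH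
  have hT1 : (1:ℝ) ≤ T := by exact_mod_cast hT
  have hTpos : (0:ℝ) < T := by linarith
  have hM0 : (0:ℝ) < M := by exact_mod_cast hM
  set C : ℝ := γ ^ 2 * σ ^ 2 / M + 2 * LR * ((H : ℝ) - 1) * γ ^ 3 * σ ^ 2 with hCdef
  -- per-step weighted inequality
  have key : ∀ t ∈ Finset.range T,
      γ / 6 * (w t * e t) ≤ ((r⁻¹) ^ t * a t - (r⁻¹) ^ (t + 1) * a (t + 1)) + w t * C := by
    intro t ht
    rw [Finset.mem_range] at ht
    have h1 := hrec t ht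
    have h2 : w t * (γ / 6 * e t)
        ≤ w t * ((1 - γ * μ) * a t - a (t + 1)
            + γ ^ 2 * σ ^ 2 / M + 2 * LR * ((H : ℝ) - 1) * γ ^ 3 * σ ^ 2) :=
      mul_le_mul_of_nonneg_left h1 (hwpos t).le
    have h1γ : 1 - γ * μ = r := by rw [hγμ, hrdef]
    have hrr : r⁻¹ * r = 1 := inv_mul_cancel₀ hrne
    have heq : w t * ((1 - γ * μ) * a t - a (t + 1)
            + γ ^ 2 * σ ^ 2 / M + 2 * LR * ((H : ℝ) - 1) * γ ^ 3 * σ ^ 2)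
        = ((r⁻¹) ^ t * a t - (r⁻¹) ^ (t + 1) * a (t + 1)) + w t * C := by
      rw [h1γ, hw' t, hCdef]
      linear_combination ((r⁻¹) ^ t * a t) * hrr
    calc γ / 6 * (w t * e t) = w t * (γ / 6 * e t) := by ring
      _ ≤ _ := h2
      _ = _ := heq
  have hC0 : 0 ≤ C := by
    rw [hCdef]
    have h1 : (0:ℝ) ≤ (H : ℝ) - 1 := by linarith
    have h2 : (0:ℝ) ≤ 2 * LR * ((H : ℝ) - 1) * γ ^ 3 * σ ^ 2 := by positivity
    positivity
  -- summed inequality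
  have hsum : γ / 6 * (∑ t ∈ Finset.range T, w t * e t) ≤ a 0 + C * W := by
    rw [Finset.mul_sum, hW]
    calc ∑ t ∈ Finset.range T, γ / 6 * (w t * e t)
        ≤ ∑ t ∈ Finset.range T,
            (((r⁻¹) ^ t * a t - (r⁻¹) ^ (t + 1) * a (t + 1)) + w t * C) :=
          Finset.sum_le_sum key
      _ = ((r⁻¹) ^ 0 * a 0 - (r⁻¹) ^ T * a T) + (∑ t ∈ Finset.range T, w t) * C := by
          rw [Finset.sum_add_distrib, Finset.sum_range_sub' (fun t => (r⁻¹) ^ t * a t),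
            ← Finset.sum_mul]
      _ ≤ a 0 + C * (∑ t ∈ Finset.range T, w t) := by
          have h1 : 0 ≤ (r⁻¹) ^ T * a T := mul_nonneg (by positivity) (ha T)
          simp only [pow_zero, one_mul]
          nlinarith [h1]
  -- lower bound on W
  have hWlb : Real.exp (x * T) ≤ W := by
    have hre : r ≤ (Real.exp x)⁻¹ := by
      have h := Real.add_one_le_exp (-x)
      rw [Real.exp_neg] at h
      rw [hrdef]; linarith
    have h1 : Real.exp x ≤ r⁻¹ := by
      rw [inv_eq_one_div, le_div_iff₀ hr0]
      have hexp : 0 < Real.exp x := Real.exp_pos x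
      nlinarith [mul_le_mul_of_nonneg_right hre hexp.le,
        inv_mul_cancel₀ (ne_of_gt hexp)]
    have h2 : (Real.exp x) ^ T ≤ (r⁻¹) ^ T := pow_le_pow_left₀ (Real.exp_pos x).le h1 T
    have h3 : (r⁻¹) ^ T = w (T - 1) := by
      rw [hw' (T - 1), Nat.sub_add_cancel hT]
    have h4 : w (T - 1) ≤ W := by
      rw [hW]
      exact Finset.single_le_sum (fun i _ => (hwpos i).le)
        (Finset.mem_range.2 (by omega))
    calc Real.exp (x * T) = (Real.exp x) ^ T := by
          rw [← Real.exp_nat_mul, mul_comm]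
      _ ≤ (r⁻¹) ^ T := h2
      _ = w (T - 1) := h3
      _ ≤ W := h4
  have hW0 : 0 < W := lt_of_lt_of_le (Real.exp_pos _) hWlb
  set S : ℝ := ∑ t ∈ Finset.range T, w t * e t with hSdef
  have hS0 : 0 ≤ S := Finset.sum_nonneg fun t _ => mul_nonneg (hwpos t).le (he t)
  have h36 : (36 * L) * (γ / 6) = 1 := by rw [hγ]; field_simp; ring
  have hS : S ≤ 36 * L * (a 0 + C * W) := by
    have h := mul_le_mul_of_nonneg_left hsum (by positivity : (0:ℝ) ≤ 36 * L)
    calc S = (36 * L) * (γ / 6) * S := by rw [h36]; ring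
      _ = 36 * L * (γ / 6 * S) := by ring
      _ ≤ 36 * L * (a 0 + C * W) := h
  have hWW : W * (1 / W) = 1 := by field_simp
  have hfinal1 : 1 / W * S ≤ 36 * L * a 0 * (1 / W) + 36 * L * C := by
    have h := mul_le_mul_of_nonneg_left hS (by positivity : (0:ℝ) ≤ 1 / W)
    calc 1 / W * S ≤ 1 / W * (36 * L * (a 0 + C * W)) := h
      _ = 36 * L * a 0 * (1 / W) + 36 * L * C * (W * (1 / W)) := by ring
      _ = 36 * L * a 0 * (1 / W) + 36 * L * C := by rw [hWW, mul_one]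
  -- bound 1/W by exp
  have hxT : x * T = μ * T / (6 * L) := by rw [hxdef]; ring
  have hinvW : 1 / W ≤ Real.exp (-(μ * T / (6 * L))) := by
    rw [← hxT, Real.exp_neg, ← inv_eq_one_div]
    have := one_div_le_one_div_of_le (Real.exp_pos (x * T)) hWlb
    rw [inv_eq_one_div, inv_eq_one_div]
    exact this
  have hA : 36 * L * a 0 * (1 / W) ≤ 36 * L * Real.exp (-(μ * T / (6 * L))) * a 0 := by
    have h := mul_le_mul_of_nonneg_left hinvW
      (mul_nonneg (by positivity : (0:ℝ) ≤ 36 * L) (ha 0))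
    linarith [h]
  -- bound the constant term
  have hHm1 : (0:ℝ) ≤ (H : ℝ) - 1 := by linarith
  have key1 : 36 * L * (γ ^ 2 * σ ^ 2 / M) = σ ^ 2 / (L * M) := by
    rw [hγ]; field_simp; ring
  have key2 : 36 * L * (2 * LR * ((H : ℝ) - 1) * γ ^ 3 * σ ^ 2)
      = LR * ((H : ℝ) - 1) * σ ^ 2 / (3 * L ^ 2) := by
    rw [hγ]; field_simp; ring
  have t1 : σ ^ 2 / (L * M) ≤ 2 * σ ^ 2 / (μ * T * M) := by
    rw [div_le_div_iff₀ (by positivity) (by positivity)]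
    linarith [mul_le_mul_of_nonneg_left hTκ (show (0:ℝ) ≤ σ ^ 2 * M by positivity)]
  have hsq : μ ^ 2 * T ^ 2 ≤ 4 * L ^ 2 := by
    have h := mul_le_mul hTκ hTκ (le_of_lt (mul_pos hμ hTpos))
      (by positivity : (0:ℝ) ≤ 2 * L)
    linarith [h]
  have t2 : LR * ((H : ℝ) - 1) * σ ^ 2 / (3 * L ^ 2)
      ≤ 4 * LR * ((H : ℝ) - 1) * σ ^ 2 / (3 * μ ^ 2 * T ^ 2) := by
    rw [div_le_div_iff₀ (by positivity) (by positivity)]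
    have hP : (0:ℝ) ≤ LR * ((H : ℝ) - 1) * σ ^ 2 :=
      mul_nonneg (mul_nonneg hLR hHm1) (sq_nonneg σ)
    have hP3 : (0:ℝ) ≤ 3 * (LR * ((H : ℝ) - 1) * σ ^ 2) :=
      mul_nonneg (by norm_num) hP
    calc LR * ((H : ℝ) - 1) * σ ^ 2 * (3 * μ ^ 2 * (T:ℝ) ^ 2)
        = 3 * (LR * ((H : ℝ) - 1) * σ ^ 2) * (μ ^ 2 * (T:ℝ) ^ 2) := by ring
      _ ≤ 3 * (LR * ((H : ℝ) - 1) * σ ^ 2) * (4 * L ^ 2) :=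
          mul_le_mul_of_nonneg_left hsq hP3
      _ = 4 * LR * ((H : ℝ) - 1) * σ ^ 2 * (3 * L ^ 2) := by ring
  have htail : 36 * L * C ≤ 2 * σ ^ 2 / (μ * T * M)
      + 4 * LR * ((H : ℝ) - 1) * σ ^ 2 / (3 * μ ^ 2 * T ^ 2) := by
    rw [hCdef, mul_add, key1, key2]
    linarith [t1, t2]
  linarith [hfinal1, hA, htail]
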